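/- Let A and B contain respectively the rigid and non-rigid connected components of a graph G, and let k be the number of isomorphism classes among the components in A. Then Fix(G) = Σ_{Y ∈ B} Fix(Y) + |A| − k. -/

import Mathlib

open SimpleGraph

/-- `φ` is a distinguishing labeling of `G`: the only automorphism preserving `φ` is the identity. -/
def IsDist {V α : Type*} (G : SimpleGraph V) (φ : V → α) : Prop :=
  ∀ π : G ≃g G, (∀ v, φ (π v) = φ v) → ∀ v, π v = v

/-- The distinguishing number `D(G)`. -/
noncomputable def distNum {V : Type*} (G : SimpleGraph V) : ℕ :=
  sInf {c : ℕ | ∃ φ : V → Fin c, IsDist G φ}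

/-- `S` is a fixing set of `G`. -/
def IsFixingSet {V : Type*} (G : SimpleGraph V) (S : Set V) : Prop :=
  ∀ π : G ≃g G, (∀ v ∈ S, π v = v) → ∀ v, π v = v

/-- The fixing number `Fix(G)`. -/
noncomputable def fixNum {V : Type*} (G : SimpleGraph V) : ℕ :=
  sInf {n : ℕ | ∃ S : Set V, S.ncard = n ∧ IsFixingSet G S}

/-- `D(G, c)`: the number of pairwise inequivalent distinguishing labelings of `G`
using at most `c` colors. -/
noncomputable def countDist {V : Type*} (G : SimpleGraph V) (c : ℕ) : ℕ :=
  Nat.card (Quot (fun φ ψ : {φ : V → Fin c // IsDist G φ} =>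
    ∃ π : G ≃g G, ∀ v, φ.1 v = ψ.1 (π v)))

/-- The disjoint union of `r` copies of `G`. -/
def copies {V : Type*} (r : ℕ) (G : SimpleGraph V) : SimpleGraph (Fin r × V) where
  Adj x y := x.1 = y.1 ∧ G.Adj x.2 y.2
  symm := by
    constructor
    rintro ⟨i, u⟩ ⟨j, v⟩ ⟨h1, h2⟩
    exact ⟨h1.symm, h2.symm⟩
  loopless := by
    constructor
    rintro ⟨i, u⟩ ⟨-, h⟩
    exact G.loopless.irrefl u h

open scoped Classical

namespace EH
variable {V : Type*} {G : SimpleGraph V}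

lemma mem_supp_of_adj {c : G.ConnectedComponent} {v w : V} (hv : v ∈ c.supp)
    (h : G.Adj v w) : w ∈ c.supp := by
  rw [ConnectedComponent.mem_supp_iff] at hv ⊢
  rw [← hv]
  exact (SimpleGraph.ConnectedComponent.connectedComponentMk_eq_of_adj h).symm

lemma supp_disj {c d : G.ConnectedComponent} (hne : c ≠ d) {v : V} (hv : v ∈ c.supp) :
    v ∉ d.supp := by
  intro hd
  rw [ConnectedComponent.mem_supp_iff] at hv hd
  exact hne (hv ▸ hd)

/-- Extend an automorphism of a component of `G` by the identity. -/
noncomputable def extendAut (c : G.ConnectedComponent)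
    (e : (G.induce c.supp) ≃g (G.induce c.supp)) : G ≃g G where
  toFun v := if h : v ∈ c.supp then (e ⟨v, h⟩ : V) else v
  invFun v := if h : v ∈ c.supp then (e.symm ⟨v, h⟩ : V) else v
  left_inv v := by
    by_cases h : v ∈ c.supp
    · simp only [dif_pos h]
      rw [dif_pos (e ⟨v, h⟩).2]
      have : (⟨((e ⟨v, h⟩ : c.supp) : V), (e ⟨v, h⟩).2⟩ : c.supp) = e ⟨v, h⟩ := rfl
      rw [this, RelIso.symm_apply_apply]
    · simp only [dif_neg h]
  right_inv v := by
    by_cases h : v ∈ c.supp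
    · simp only [dif_pos h]
      rw [dif_pos (e.symm ⟨v, h⟩).2]
      have : (⟨((e.symm ⟨v, h⟩ : c.supp) : V), (e.symm ⟨v, h⟩).2⟩ : c.supp) = e.symm ⟨v, h⟩ := rfl
      rw [this, RelIso.apply_symm_apply]
    · simp only [dif_neg h]
  map_rel_iff' := by
    intro a b
    by_cases ha : a ∈ c.supp <;> by_cases hb : b ∈ c.supp
    · simp only [Equiv.coe_fn_mk, dif_pos ha, dif_pos hb]
      exact e.map_rel_iff (a := ⟨a, ha⟩) (b := ⟨b, hb⟩)
    · simp only [Equiv.coe_fn_mk, dif_pos ha, dif_neg hb]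
      exact iff_of_false (fun h => hb (mem_supp_of_adj (e ⟨a, ha⟩).2 h))
        (fun h => hb (mem_supp_of_adj ha h))
    · simp only [Equiv.coe_fn_mk, dif_neg ha, dif_pos hb]
      exact iff_of_false (fun h => ha (mem_supp_of_adj (e ⟨b, hb⟩).2 h.symm))
        (fun h => ha (mem_supp_of_adj hb h.symm))
    · simp only [Equiv.coe_fn_mk, dif_neg ha, dif_neg hb]

lemma extendAut_apply_mem {c : G.ConnectedComponent}
    (e : (G.induce c.supp) ≃g (G.induce c.supp)) {v : V} (h : v ∈ c.supp) :
    extendAut c e v = (e ⟨v, h⟩ : V) := dif_pos h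

lemma extendAut_apply_not_mem {c : G.ConnectedComponent}
    (e : (G.induce c.supp) ≃g (G.induce c.supp)) {v : V} (h : v ∉ c.supp) :
    extendAut c e v = v := dif_neg h


/-- Swap two distinct isomorphic components of `G`. -/
noncomputable def swapAut {c d : G.ConnectedComponent} (hne : c ≠ d)
    (f : (G.induce c.supp) ≃g (G.induce d.supp)) : G ≃g G where
  toFun v := if h : v ∈ c.supp then (f ⟨v, h⟩ : V)
    else if h : v ∈ d.supp then (f.symm ⟨v, h⟩ : V) else v
  invFun v := if h : v ∈ c.supp then (f ⟨v, h⟩ : V)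
    else if h : v ∈ d.supp then (f.symm ⟨v, h⟩ : V) else v
  left_inv v := by
    by_cases h : v ∈ c.supp
    · simp only [dif_pos h]
      rw [dif_neg (supp_disj hne.symm (f ⟨v, h⟩).2), dif_pos (f ⟨v, h⟩).2]
      have : (⟨((f ⟨v, h⟩ : d.supp) : V), (f ⟨v, h⟩).2⟩ : d.supp) = f ⟨v, h⟩ := rfl
      rw [this, RelIso.symm_apply_apply]
    · simp only [dif_neg h]
      by_cases h2 : v ∈ d.supp
      · simp only [dif_pos h2]
        rw [dif_pos (f.symm ⟨v, h2⟩).2]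
        have : (⟨((f.symm ⟨v, h2⟩ : c.supp) : V), (f.symm ⟨v, h2⟩).2⟩ : c.supp)
            = f.symm ⟨v, h2⟩ := rfl
        rw [this, RelIso.apply_symm_apply]
      · simp only [dif_neg h2, dif_neg h]
  right_inv v := by
    by_cases h : v ∈ c.supp
    · simp only [dif_pos h]
      rw [dif_neg (supp_disj hne.symm (f ⟨v, h⟩).2), dif_pos (f ⟨v, h⟩).2]
      have : (⟨((f ⟨v, h⟩ : d.supp) : V), (f ⟨v, h⟩).2⟩ : d.supp) = f ⟨v, h⟩ := rfl
      rw [this, RelIso.symm_apply_apply]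
    · simp only [dif_neg h]
      by_cases h2 : v ∈ d.supp
      · simp only [dif_pos h2]
        rw [dif_pos (f.symm ⟨v, h2⟩).2]
        have : (⟨((f.symm ⟨v, h2⟩ : c.supp) : V), (f.symm ⟨v, h2⟩).2⟩ : c.supp)
            = f.symm ⟨v, h2⟩ := rfl
        rw [this, RelIso.apply_symm_apply]
      · simp only [dif_neg h2, dif_neg h]
  map_rel_iff' := by
    intro a b
    by_cases ha : a ∈ c.supp <;> by_cases hb : b ∈ c.supp
    · simp only [Equiv.coe_fn_mk, dif_pos ha, dif_pos hb]
      exact f.map_rel_iff (a := ⟨a, ha⟩) (b := ⟨b, hb⟩)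
    · simp only [Equiv.coe_fn_mk, dif_pos ha, dif_neg hb]
      by_cases hb2 : b ∈ d.supp
      · simp only [dif_pos hb2]
        exact iff_of_false
          (fun h => supp_disj hne (f.symm ⟨b, hb2⟩).2 (mem_supp_of_adj (f ⟨a, ha⟩).2 h))
          (fun h => hb (mem_supp_of_adj ha h))
      · simp only [dif_neg hb2]
        exact iff_of_false (fun h => hb2 (mem_supp_of_adj (f ⟨a, ha⟩).2 h))
          (fun h => hb (mem_supp_of_adj ha h))
    · simp only [Equiv.coe_fn_mk, dif_neg ha, dif_pos hb]
      by_cases ha2 : a ∈ d.supp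
      · simp only [dif_pos ha2]
        exact iff_of_false
          (fun h => supp_disj hne (mem_supp_of_adj (f.symm ⟨a, ha2⟩).2 h) (f ⟨b, hb⟩).2)
          (fun h => ha (mem_supp_of_adj hb h.symm))
      · simp only [dif_neg ha2]
        exact iff_of_false (fun h => ha2 (mem_supp_of_adj (f ⟨b, hb⟩).2 h.symm))
          (fun h => ha (mem_supp_of_adj hb h.symm))
    · simp only [Equiv.coe_fn_mk, dif_neg ha, dif_neg hb]
      by_cases ha2 : a ∈ d.supp <;> by_cases hb2 : b ∈ d.supp
      · simp only [dif_pos ha2, dif_pos hb2]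
        exact f.symm.map_rel_iff (a := ⟨a, ha2⟩) (b := ⟨b, hb2⟩)
      · simp only [dif_pos ha2, dif_neg hb2]
        exact iff_of_false (fun h => hb (mem_supp_of_adj (f.symm ⟨a, ha2⟩).2 h))
          (fun h => hb2 (mem_supp_of_adj ha2 h))
      · simp only [dif_neg ha2, dif_pos hb2]
        exact iff_of_false (fun h => ha (mem_supp_of_adj (f.symm ⟨b, hb2⟩).2 h.symm))
          (fun h => ha2 (mem_supp_of_adj hb2 h.symm))
      · simp only [dif_neg ha2, dif_neg hb2]

lemma swapAut_apply_mem {c d : G.ConnectedComponent} (hne : c ≠ d)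
    (f : (G.induce c.supp) ≃g (G.induce d.supp)) {v : V} (h : v ∈ c.supp) :
    swapAut hne f v = (f ⟨v, h⟩ : V) := dif_pos h

lemma swapAut_apply_not_mem {c d : G.ConnectedComponent} (hne : c ≠ d)
    (f : (G.induce c.supp) ≃g (G.induce d.supp)) {v : V} (h : v ∉ c.supp)
    (h2 : v ∉ d.supp) : swapAut hne f v = v := by
  show dite _ _ _ = v
  rw [dif_neg h, dif_neg h2]

/-- Restrict an automorphism of `G` preserving a component to that component. -/
def restrictAut (π : G ≃g G) (c : G.ConnectedComponent)
    (h1 : ∀ v ∈ c.supp, π v ∈ c.supp) (h2 : ∀ v ∈ c.supp, π.symm v ∈ c.supp) :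
    (G.induce c.supp) ≃g (G.induce c.supp) where
  toFun x := ⟨π x, h1 x x.2⟩
  invFun x := ⟨π.symm x, h2 x x.2⟩
  left_inv x := Subtype.ext (π.symm_apply_apply x)
  right_inv x := Subtype.ext (π.apply_symm_apply x)
  map_rel_iff' := π.map_rel_iff

lemma cce_mk (π : G ≃g G) (v : V) :
    π.connectedComponentEquiv (G.connectedComponentMk v) = G.connectedComponentMk (π v) := by
  simp [Iso.connectedComponentEquiv, ConnectedComponent.map_mk]

/-- The isomorphism between a component and its image under an automorphism. -/
def mapIso (π : G ≃g G) (c : G.ConnectedComponent) :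
    (G.induce c.supp) ≃g (G.induce (π.connectedComponentEquiv c).supp) where
  toEquiv := ConnectedComponent.isoEquivSupp π c
  map_rel_iff' := π.map_rel_iff

/-- Rigidity transfers along isomorphisms. -/
lemma rigid_of_iso {c d : G.ConnectedComponent}
    (f : (G.induce c.supp) ≃g (G.induce d.supp))
    (hc : ∀ e : (G.induce c.supp) ≃g (G.induce c.supp), ∀ v, e v = v) :
    ∀ e : (G.induce d.supp) ≃g (G.induce d.supp), ∀ w, e w = w := by
  intro e w
  have h2 := hc (f.trans (e.trans f.symm)) (f.symm w)
  simp only [RelIso.trans_apply] at h2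
  rw [f.apply_symm_apply] at h2
  exact f.symm.injective h2

lemma mapsTo_of_cce_fixed (π : G ≃g G) {c : G.ConnectedComponent}
    (h : π.connectedComponentEquiv c = c) :
    (∀ v ∈ c.supp, π v ∈ c.supp) ∧ (∀ v ∈ c.supp, π.symm v ∈ c.supp) := by
  constructor
  · intro v hv
    rw [ConnectedComponent.mem_supp_iff] at hv ⊢
    rw [← cce_mk π v, hv, h]
  · intro v hv
    rw [ConnectedComponent.mem_supp_iff] at hv ⊢
    have : π.symm.connectedComponentEquiv c = c := by
      rw [Iso.connectedComponentEquiv_symm]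
      exact (Equiv.symm_apply_eq _).mpr h.symm
    rw [← cce_mk π.symm v, hv, this]

lemma cce_fixed_of_fix (π : G ≃g G) {v₀ : V} {c : G.ConnectedComponent}
    (hv₀ : v₀ ∈ c.supp) (h : π v₀ = v₀) : π.connectedComponentEquiv c = c := by
  rw [ConnectedComponent.mem_supp_iff] at hv₀
  rw [← hv₀, cce_mk, h]


lemma fixSet_nonempty : {n : ℕ | ∃ S : Set V, S.ncard = n ∧ IsFixingSet G S}.Nonempty :=
  ⟨(Set.univ : Set V).ncard, Set.univ, rfl, fun π h v => h v trivial⟩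

lemma fixNum_exists : ∃ S : Set V, S.ncard = fixNum G ∧ IsFixingSet G S :=
  Nat.sInf_mem (fixSet_nonempty (G := G))

lemma fixNum_le {S : Set V} (h : IsFixingSet G S) : fixNum G ≤ S.ncard :=
  Nat.sInf_le ⟨S, rfl, h⟩

/-- The trace of a fixing set of `G` on a component is a fixing set of that component. -/
lemma restrict_fixing {S : Set V} (hS : IsFixingSet G S) (c : G.ConnectedComponent) :
    IsFixingSet (G.induce c.supp) {x : c.supp | (x : V) ∈ S} := by
  intro e he x
  have hfix : ∀ v, extendAut c e v = v := by
    refine hS (extendAut c e) (fun s hs => ?_)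
    by_cases h : s ∈ c.supp
    · rw [extendAut_apply_mem e h]
      exact congrArg Subtype.val (he ⟨s, h⟩ hs)
    · exact extendAut_apply_not_mem e h
  have h2 := hfix x
  rw [extendAut_apply_mem e x.2] at h2
  exact Subtype.ext h2

lemma lift_ncard (S : Set V) (c : G.ConnectedComponent) :
    {x : c.supp | (x : V) ∈ S}.ncard = (S ∩ c.supp).ncard := by
  rw [← Set.ncard_image_of_injective _ (Subtype.val_injective
    (p := fun v => v ∈ c.supp))]
  congr 1
  ext v
  constructor
  · rintro ⟨x, hx, rfl⟩
    exact ⟨hx, x.2⟩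
  · rintro ⟨h1, h2⟩
    exact ⟨⟨v, h2⟩, h1, rfl⟩


/-- A component is rigid if its induced graph has trivial automorphisms. -/
def Rigid {V : Type*} (G : SimpleGraph V) (c : G.ConnectedComponent) : Prop :=
  ∀ e : (G.induce c.supp) ≃g (G.induce c.supp), ∀ v, e v = v

lemma lower_bound {V : Type*} [Fintype V] {G : SimpleGraph V} {S : Set V}
    (hS : IsFixingSet G S) :
    (∑ᶠ c ∈ {c : G.ConnectedComponent | ¬ Rigid G c}, fixNum (G.induce c.supp))
      + (Nat.card {c : G.ConnectedComponent | Rigid G c}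
        - Nat.card (Quot (fun x y : {c : G.ConnectedComponent // Rigid G c} =>
            Nonempty ((G.induce x.1.supp) ≃g (G.induce y.1.supp))))) ≤ S.ncard := by
  classical
  have hfinCC : Finite G.ConnectedComponent :=
    Finite.of_surjective G.connectedComponentMk (fun c => c.exists_rep)
  have hftCC : Fintype G.ConnectedComponent := Fintype.ofFinite _
  set q : {c : G.ConnectedComponent // Rigid G c} →
      {c : G.ConnectedComponent // Rigid G c} → Prop := fun x y =>
    Nonempty ((G.induce x.1.supp) ≃g (G.induce y.1.supp)) with hqdef
  have hequiv : Equivalence q :=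
    ⟨fun x => ⟨RelIso.refl _⟩, fun h => h.elim (fun f => ⟨f.symm⟩),
      fun h h' => h.elim fun f => h'.elim fun f' => ⟨f.trans f'⟩⟩
  -- partition of S along components
  have hpart : S.ncard = ∑ c : G.ConnectedComponent, (S ∩ c.supp).ncard := by
    rw [Set.ncard_eq_toFinset_card' S,
      Finset.card_eq_sum_card_fiberwise
        (f := fun v => G.connectedComponentMk v) (t := Finset.univ)
        (fun v _ => Finset.mem_univ _)]
    refine Finset.sum_congr rfl fun c _ => ?_
    rw [Set.ncard_eq_toFinset_card' (S ∩ c.supp)]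
    congr 1
    ext v
    simp [ConnectedComponent.mem_supp_iff, eq_comm]
  have hB : ∀ c : G.ConnectedComponent, fixNum (G.induce c.supp) ≤ (S ∩ c.supp).ncard := fun c => by
    have := fixNum_le (restrict_fixing hS c)
    rwa [lift_ncard] at this
  -- untouched rigid components inject into the quotient
  have hTinj : Function.Injective
      (fun c : {c : G.ConnectedComponent // Rigid G c ∧ S ∩ c.supp = ∅} =>
        Quot.mk q ⟨c.1, c.2.1⟩) := by
    intro x y hxy
    dsimp only at hxy
    rw [Quot.eq] at hxy
    have hrel : q ⟨x.1, x.2.1⟩ ⟨y.1, y.2.1⟩ := (Equivalence.eqvGen_iff hequiv).mp hxy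
    obtain ⟨f⟩ := hrel
    by_contra hne
    have hne' : x.1 ≠ y.1 := fun h => hne (Subtype.ext h)
    have hfixS : ∀ s ∈ S, swapAut hne' f s = s := by
      intro s hs
      refine swapAut_apply_not_mem hne' f (fun hsup => ?_) (fun hsup => ?_)
      · exact (Set.eq_empty_iff_forall_notMem.mp x.2.2 s) ⟨hs, hsup⟩
      · exact (Set.eq_empty_iff_forall_notMem.mp y.2.2 s) ⟨hs, hsup⟩
    have hfix := hS (swapAut hne' f) hfixS
    obtain ⟨v₀, hv₀⟩ := x.1.exists_rep
    have hv₀' : v₀ ∈ x.1.supp := hv₀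
    have h1 := hfix v₀
    rw [swapAut_apply_mem hne' f hv₀'] at h1
    exact supp_disj hne' hv₀' (h1 ▸ (f ⟨v₀, hv₀'⟩).2)
  have hTcard : {c : G.ConnectedComponent | Rigid G c ∧ S ∩ c.supp = ∅}.ncard
      ≤ Nat.card (Quot q) := by
    rw [← Nat.card_coe_set_eq]
    exact Nat.card_le_card_of_injective _ hTinj
  -- Finset bookkeeping
  set Af : Finset G.ConnectedComponent := Finset.univ.filter (fun c => Rigid G c) with hAf
  set Bf : Finset G.ConnectedComponent := Finset.univ.filter (fun c => ¬ Rigid G c) with hBf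
  have hsum : ∑ c : G.ConnectedComponent, (S ∩ c.supp).ncard
      = ∑ c ∈ Bf, (S ∩ c.supp).ncard + ∑ c ∈ Af, (S ∩ c.supp).ncard := by
    rw [hAf, hBf, add_comm, Finset.sum_filter_add_sum_filter_not]
  have hfinsum : (∑ᶠ c ∈ {c : G.ConnectedComponent | ¬ Rigid G c},
      fixNum (G.induce c.supp)) = ∑ c ∈ Bf, fixNum (G.induce c.supp) := by
    rw [← finsum_mem_coe_finset]
    congr 1
    ext c
    simp [hBf]
  have h1 : (∑ᶠ c ∈ {c : G.ConnectedComponent | ¬ Rigid G c},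
      fixNum (G.induce c.supp)) ≤ ∑ c ∈ Bf, (S ∩ c.supp).ncard := by
    rw [hfinsum]
    exact Finset.sum_le_sum fun c _ => hB c
  have hAcard : Nat.card {c : G.ConnectedComponent | Rigid G c} = Af.card := by
    rw [Nat.card_coe_set_eq, Set.ncard_eq_toFinset_card']
    congr 1
    ext c
    simp [hAf]
  have hTf : Af.filter (fun c => (S ∩ c.supp).ncard = 0)
      = {c : G.ConnectedComponent | Rigid G c ∧ S ∩ c.supp = ∅}.toFinset := by
    ext c
    simp only [Finset.mem_filter, Set.mem_toFinset, hAf, Finset.mem_univ, true_and,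
      Set.mem_setOf_eq, Set.ncard_eq_zero (Set.toFinite _)]
  have h2 : Nat.card {c : G.ConnectedComponent | Rigid G c} - Nat.card (Quot q)
      ≤ ∑ c ∈ Af, (S ∩ c.supp).ncard := by
    have step1 : (Af.filter (fun c => ¬ (S ∩ c.supp).ncard = 0)).card
        ≤ ∑ c ∈ Af, (S ∩ c.supp).ncard := by
      rw [Finset.card_filter]
      refine Finset.sum_le_sum fun c _ => ?_
      by_cases h : (S ∩ c.supp).ncard = 0
      · simp [h]
      · rw [if_pos h]
        exact Nat.one_le_iff_ne_zero.mpr h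
    have hsplit := Finset.card_filter_add_card_filter_not
      (s := Af) (p := fun c => (S ∩ c.supp).ncard = 0)
    have step3 : (Af.filter (fun c => (S ∩ c.supp).ncard = 0)).card ≤ Nat.card (Quot q) := by
      rw [hTf, ← Set.ncard_eq_toFinset_card']
      exact hTcard
    omega
  calc (∑ᶠ c ∈ {c : G.ConnectedComponent | ¬ Rigid G c}, fixNum (G.induce c.supp))
      + (Nat.card {c : G.ConnectedComponent | Rigid G c} - Nat.card (Quot q))
      ≤ ∑ c ∈ Bf, (S ∩ c.supp).ncard + ∑ c ∈ Af, (S ∩ c.supp).ncard := add_le_add h1 h2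
    _ = S.ncard := by rw [hpart, hsum]

lemma upper_bound {V : Type*} [Fintype V] (G : SimpleGraph V) :
    fixNum G ≤
      (∑ᶠ c ∈ {c : G.ConnectedComponent | ¬ Rigid G c}, fixNum (G.induce c.supp))
      + (Nat.card {c : G.ConnectedComponent | Rigid G c}
        - Nat.card (Quot (fun x y : {c : G.ConnectedComponent // Rigid G c} =>
            Nonempty ((G.induce x.1.supp) ≃g (G.induce y.1.supp))))) := by
  classical
  have hfinCC : Finite G.ConnectedComponent :=
    Finite.of_surjective G.connectedComponentMk (fun c => c.exists_rep)
  have hftCC : Fintype G.ConnectedComponent := Fintype.ofFinite _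
  set q : {c : G.ConnectedComponent // Rigid G c} →
      {c : G.ConnectedComponent // Rigid G c} → Prop := fun x y =>
    Nonempty ((G.induce x.1.supp) ≃g (G.induce y.1.supp)) with hqdef
  -- minimum fixing sets of the components
  choose Sc hScard hScfix using fun c : G.ConnectedComponent =>
    fixNum_exists (G := G.induce c.supp)
  -- representative vertices of components
  have hwex : ∀ c : G.ConnectedComponent, ∃ v, v ∈ c.supp := fun c => by
    obtain ⟨v, hv⟩ := c.exists_rep
    exact ⟨v, hv⟩
  choose w hw using hwex
  -- representatives of the isomorphism classes of rigid components
  have hsurj : Function.Surjective (Quot.mk q) := fun x => Quot.exists_rep x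
  set rep : Quot q → {c : G.ConnectedComponent // Rigid G c} :=
    Function.surjInv hsurj with hrepdef
  have hrep : ∀ qq, Quot.mk q (rep qq) = qq := fun qq => Function.surjInv_eq hsurj qq
  set R : Set G.ConnectedComponent := {c | ∃ qq, (rep qq).1 = c} with hRdef
  -- the fixing set
  set Bf : Finset G.ConnectedComponent := Finset.univ.filter (fun c => ¬ Rigid G c) with hBf
  set SB : Finset V :=
    Bf.biUnion (fun c => (Set.toFinite (Subtype.val '' Sc c)).toFinset) with hSBdef
  set S : Set V := ↑SB ∪ w '' ({c | Rigid G c} \ R) with hSdef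
  have hmemSB : ∀ {c : G.ConnectedComponent}, ¬ Rigid G c →
      ∀ x ∈ Sc c, (x : V) ∈ S := by
    intro c hc x hx
    rw [hSdef]
    refine Set.mem_union_left _ ?_
    rw [Finset.mem_coe, hSBdef]
    refine Finset.mem_biUnion.mpr ⟨c, by simp [hBf, hc], ?_⟩
    rw [Set.Finite.mem_toFinset]
    exact ⟨x, hx, rfl⟩
  have hmemw : ∀ {c : G.ConnectedComponent}, Rigid G c → c ∉ R → w c ∈ S := by
    intro c hc hcR
    rw [hSdef]
    exact Set.mem_union_right _ ⟨c, ⟨hc, hcR⟩, rfl⟩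
  have hScne : ∀ c : G.ConnectedComponent, ¬ Rigid G c → (Sc c).Nonempty := by
    intro c hc
    rw [Set.nonempty_iff_ne_empty]
    intro he
    refine hc (fun e v => ?_)
    exact hScfix c e (by rw [he]; exact fun x hx => absurd hx (Set.notMem_empty x)) v
  -- S is a fixing set
  have hSfix : IsFixingSet G S := by
    intro π hπ
    have hfixed : ∀ c : G.ConnectedComponent, c ∉ R →
        π.connectedComponentEquiv c = c := by
      intro c hcR
      by_cases hc : Rigid G c
      · exact cce_fixed_of_fix π (hw c) (hπ _ (hmemw hc hcR))
      · obtain ⟨x, hx⟩ := hScne c hc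
        exact cce_fixed_of_fix π x.2 (hπ _ (hmemSB hc x hx))
    have hall : ∀ c : G.ConnectedComponent, π.connectedComponentEquiv c = c := by
      intro c
      by_cases hcR : c ∈ R
      · obtain ⟨q1, hq1⟩ := hcR
        by_cases hdR : π.connectedComponentEquiv c ∈ R
        · obtain ⟨q2, hq2⟩ := hdR
          have hrel : q (rep q1) (rep q2) := by
            rw [hqdef]
            dsimp only
            rw [hq1, hq2]
            exact ⟨mapIso π c⟩
          have heq : q1 = q2 := by
            rw [← hrep q1, ← hrep q2]
            exact Quot.sound hrel
          rw [← hq2, ← heq, hq1]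
        · have h2 := hfixed _ hdR
          exact π.connectedComponentEquiv.injective h2
      · exact hfixed c hcR
    intro v
    have hcc := hall (G.connectedComponentMk v)
    obtain ⟨h1, h2⟩ := mapsTo_of_cce_fixed π hcc
    have hv : v ∈ (G.connectedComponentMk v).supp := rfl
    have heid : ∀ x, restrictAut π (G.connectedComponentMk v) h1 h2 x = x := by
      by_cases hcrig : Rigid G (G.connectedComponentMk v)
      · exact hcrig _
      · refine hScfix _ _ (fun x hx => ?_)
        exact Subtype.ext (hπ _ (hmemSB hcrig x hx))
    exact congrArg Subtype.val (heid ⟨v, hv⟩)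
  -- cardinality bound
  refine le_trans (fixNum_le hSfix) ?_
  have hfinsum : (∑ᶠ c ∈ {c : G.ConnectedComponent | ¬ Rigid G c},
      fixNum (G.induce c.supp)) = ∑ c ∈ Bf, fixNum (G.induce c.supp) := by
    rw [← finsum_mem_coe_finset]
    congr 1
    ext c
    simp [hBf]
  have hSB2 : SB.card ≤ ∑ᶠ c ∈ {c : G.ConnectedComponent | ¬ Rigid G c},
      fixNum (G.induce c.supp) := by
    rw [hfinsum, hSBdef]
    refine le_trans Finset.card_biUnion_le (Finset.sum_le_sum fun c hc => ?_)
    rw [← Set.ncard_eq_toFinset_card,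
      Set.ncard_image_of_injective _ Subtype.val_injective, hScard c]
  have hA : (w '' ({c : G.ConnectedComponent | Rigid G c} \ R)).ncard ≤
      Nat.card {c : G.ConnectedComponent | Rigid G c} - Nat.card (Quot q) := by
    have hRsub : R ⊆ {c : G.ConnectedComponent | Rigid G c} := by
      rintro c ⟨qq, rfl⟩
      exact (rep qq).2
    have hinj : Function.Injective rep := by
      intro a b hab
      rw [← hrep a, ← hrep b, hab]
    have hReq : R = Subtype.val '' Set.range rep := by
      ext c
      constructor
      · rintro ⟨qq, rfl⟩
        exact ⟨rep qq, ⟨qq, rfl⟩, rfl⟩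
      · rintro ⟨x, ⟨qq, rfl⟩, rfl⟩
        exact ⟨qq, rfl⟩
    have hRcard : R.ncard = Nat.card (Quot q) := by
      rw [hReq, Set.ncard_image_of_injective _ Subtype.val_injective,
        ← Nat.card_coe_set_eq]
      exact (Nat.card_congr (Equiv.ofInjective rep hinj)).symm
    calc (w '' ({c : G.ConnectedComponent | Rigid G c} \ R)).ncard
        ≤ ({c : G.ConnectedComponent | Rigid G c} \ R).ncard :=
          Set.ncard_image_le (Set.toFinite _)
      _ = {c : G.ConnectedComponent | Rigid G c}.ncard - R.ncard :=
          Set.ncard_diff hRsub (Set.toFinite _)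
      _ = Nat.card {c : G.ConnectedComponent | Rigid G c} - Nat.card (Quot q) := by
          rw [hRcard, Nat.card_coe_set_eq]
  calc S.ncard ≤ (↑SB : Set V).ncard
        + (w '' ({c : G.ConnectedComponent | Rigid G c} \ R)).ncard := by
        rw [hSdef]; exact Set.ncard_union_le _ _
    _ = SB.card + (w '' ({c : G.ConnectedComponent | Rigid G c} \ R)).ncard := by
        rw [Set.ncard_coe_finset]
    _ ≤ _ := add_le_add hSB2 hA

end EH

/-- Erwin–Harary: `Fix(G)` equals the sum of the fixing numbers of the non-rigid components,
plus the number of rigid components minus the number of their isomorphism classes. -/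
theorem fix_components {V : Type*} [Fintype V] (G : SimpleGraph V) :
    fixNum G =
      (∑ᶠ c ∈ {c : G.ConnectedComponent |
          ¬ ∀ e : (G.induce c.supp) ≃g (G.induce c.supp), ∀ v, e v = v},
        fixNum (G.induce c.supp))
      + Nat.card {c : G.ConnectedComponent |
          ∀ e : (G.induce c.supp) ≃g (G.induce c.supp), ∀ v, e v = v}
      - Nat.card (Quot (fun x y : {c : G.ConnectedComponent //
            ∀ e : (G.induce c.supp) ≃g (G.induce c.supp), ∀ v, e v = v} =>
          Nonempty ((G.induce x.1.supp) ≃g (G.induce y.1.supp)))) := by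
  classical
  show fixNum G =
      (∑ᶠ c ∈ {c : G.ConnectedComponent | ¬ EH.Rigid G c}, fixNum (G.induce c.supp))
      + Nat.card {c : G.ConnectedComponent | EH.Rigid G c}
      - Nat.card (Quot (fun x y : {c : G.ConnectedComponent // EH.Rigid G c} =>
          Nonempty ((G.induce x.1.supp) ≃g (G.induce y.1.supp))))
  have hfinCC : Finite G.ConnectedComponent :=
    Finite.of_surjective G.connectedComponentMk (fun c => c.exists_rep)
  have hk : Nat.card (Quot (fun x y : {c : G.ConnectedComponent // EH.Rigid G c} =>
        Nonempty ((G.induce x.1.supp) ≃g (G.induce y.1.supp))))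
      ≤ Nat.card {c : G.ConnectedComponent | EH.Rigid G c} :=
    Nat.card_le_card_of_surjective _ (fun x => Quot.exists_rep x)
  rw [Nat.add_sub_assoc hk]
  refine le_antisymm (EH.upper_bound G) ?_
  refine le_csInf EH.fixSet_nonempty ?_
  rintro n ⟨S, rfl, hfix⟩
  exact EH.lower_bound hfix
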